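/- Let α_R, α_F ∈ [0,1), let R be the real 2×2 matrix with rows (1, −α_R) and (−α_F, 1), let T_D : ℝ ⇒ ℝ be a monotone set-valued operator, define T_NPN : ℝ² ⇒ ℝ² by T_NPN(v₁,v₂) := {R·(u₁,u₂) : u₁ ∈ T_D(v₁), u₂ ∈ T_D(v₂)}, and for r > 0 set T_{NPN,r} := T_NPN + (1/r)·id (graph {(v, w + (1/r)v) : (v,w) ∈ graph T_NPN}). Then T_{NPN,r} is (r(1 − √2)/2)-comonotone: ⟨x − y, u − v⟩ ≥ (r(1 − √2)/2)·‖u − v‖² for all (x,u), (y,v) in the graph of T_{NPN,r}. -/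

import Mathlib

/-- The Ebers–Moll matrix with rows `(1, -αR)` and `(-αF, 1)`, applied to a vector of
`ℝ²` (with the Euclidean inner product and norm). -/
noncomputable def applyEM (aR aF : ℝ) (w : EuclideanSpace ℝ (Fin 2)) :
    EuclideanSpace ℝ (Fin 2) :=
  (WithLp.equiv 2 (Fin 2 → ℝ)).symm
    ((Matrix.of ![![1, -aR], ![-aF, 1]]).mulVec (WithLp.equiv 2 (Fin 2 → ℝ) w))

/-- A set-valued operator `T_D : ℝ ⇒ ℝ` is monotone if `(u - v)(x - y) ≥ 0` whenever
`u ∈ T_D(x)` and `v ∈ T_D(y)`. -/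
def MonotoneSetValued (TD : ℝ → Set ℝ) : Prop :=
  ∀ ⦃x u y v : ℝ⦄, u ∈ TD x → v ∈ TD y → (u - v) * (x - y) ≥ 0

/-- The Ebers–Moll transistor operator `T_NPN : ℝ² ⇒ ℝ²` built from the diode law `T_D`. -/
noncomputable def TNPN (aR aF : ℝ) (TD : ℝ → Set ℝ) (v : EuclideanSpace ℝ (Fin 2)) :
    Set (EuclideanSpace ℝ (Fin 2)) :=
  {w | ∃ u₁ ∈ TD (v 0), ∃ u₂ ∈ TD (v 1),
    w = applyEM aR aF ((WithLp.equiv 2 (Fin 2 → ℝ)).symm ![u₁, u₂])}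

/-- `T_NPN + (1/r)·id`, the transistor with leakage resistance `r`. -/
noncomputable def TNPNr (aR aF : ℝ) (TD : ℝ → Set ℝ) (r : ℝ)
    (v : EuclideanSpace ℝ (Fin 2)) : Set (EuclideanSpace ℝ (Fin 2)) :=
  (fun w => w + (1 / r) • v) '' TNPN aR aF TD v

/-- The crucial sign fact: if `c₁ d₁ ≥ 0` and `c₂ d₂ ≥ 0` and `a, f ∈ [0,1]`, then for
`w = R c` (with `R` the Ebers–Moll matrix), `⟨d, w⟩ + cross ≥ 0` or `⟨d, w⟩ - cross ≥ 0`
where `cross = d₁ w₂ - d₂ w₁`. -/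
lemma key_max (a f c₁ c₂ d₁ d₂ : ℝ) (ha0 : 0 ≤ a) (ha1 : a ≤ 1) (hf0 : 0 ≤ f)
    (hf1 : f ≤ 1) (h1 : 0 ≤ c₁ * d₁) (h2 : 0 ≤ c₂ * d₂) :
    0 ≤ (d₁*(c₁-a*c₂)+d₂*(c₂-f*c₁)) + (d₁*(c₂-f*c₁)-d₂*(c₁-a*c₂)) ∨
    0 ≤ (d₁*(c₁-a*c₂)+d₂*(c₂-f*c₁)) - (d₁*(c₂-f*c₁)-d₂*(c₁-a*c₂)) := by
  by_contra h
  push_neg at h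
  obtain ⟨hp, hm⟩ := h
  have hA0 : (0:ℝ) ≤ 1 + a := by linarith
  have hA1 : (0:ℝ) ≤ 1 - a := by linarith
  have hF0 : (0:ℝ) ≤ 1 + f := by linarith
  have hF1 : (0:ℝ) ≤ 1 - f := by linarith
  rcases le_or_gt 0 (d₁*c₂) with ht1 | ht1 <;> rcases le_or_gt 0 (d₂*c₁) with ht2 | ht2
  · -- both ≥ 0
    have hB1 : (0:ℝ) ≤ (1-f)*(c₁*d₁) + (1+a)*(c₂*d₂) + (1-a)*(d₁*c₂) := by
      have := mul_nonneg hF1 h1; have := mul_nonneg hA0 h2; have := mul_nonneg hA1 ht1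
      linarith
    have hB2 : (0:ℝ) ≤ (1+f)*(c₁*d₁) + (1-a)*(c₂*d₂) + (1-f)*(d₂*c₁) := by
      have := mul_nonneg hF0 h1; have := mul_nonneg hA1 h2; have := mul_nonneg hF1 ht2
      linarith
    have k1 : (1-f)*(c₁*d₁) + (1+a)*(c₂*d₂) + (1-a)*(d₁*c₂) < (1+f)*(d₂*c₁) := by linarith
    have k2 : (1+f)*(c₁*d₁) + (1-a)*(c₂*d₂) + (1-f)*(d₂*c₁) < (1+a)*(d₁*c₂) := by linarith
    have k3 := mul_lt_mul'' k1 k2 hB1 hB2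
    nlinarith [k3,
      mul_nonneg (mul_nonneg hF1 hF0) (mul_nonneg h1 h1),
      mul_nonneg (mul_nonneg hF1 hA1) (mul_nonneg h1 h2),
      mul_nonneg (mul_nonneg hF1 hF1) (mul_nonneg h1 ht2),
      mul_nonneg (mul_nonneg hA0 hA1) (mul_nonneg h2 h2),
      mul_nonneg (mul_nonneg hA0 hF1) (mul_nonneg h2 ht2),
      mul_nonneg (mul_nonneg hA1 hF0) (mul_nonneg h1 ht1),
      mul_nonneg (mul_nonneg hA1 hA1) (mul_nonneg h2 ht1),
      mul_nonneg (mul_nonneg hA1 hF1) (mul_nonneg ht1 ht2)]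
  · -- t₁ ≥ 0, t₂ < 0 : Q⁺ ≥ 0 directly
    nlinarith [mul_nonneg hF1 h1, mul_nonneg hA0 h2, mul_nonneg hA1 ht1,
      mul_nonneg hF0 (neg_nonneg.2 ht2.le)]
  · -- t₁ < 0, t₂ ≥ 0 : Q⁻ ≥ 0 directly
    nlinarith [mul_nonneg hF0 h1, mul_nonneg hA1 h2, mul_nonneg hF1 ht2,
      mul_nonneg hA0 (neg_nonneg.2 ht1.le)]
  · -- both < 0
    have hT1 : (0:ℝ) ≤ -(d₁*c₂) := by linarith
    have hT2 : (0:ℝ) ≤ -(d₂*c₁) := by linarith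
    have hB1 : (0:ℝ) ≤ (1-f)*(c₁*d₁) + (1+a)*(c₂*d₂) + (1+f)*(-(d₂*c₁)) := by
      have := mul_nonneg hF1 h1; have := mul_nonneg hA0 h2; have := mul_nonneg hF0 hT2
      linarith
    have hB2 : (0:ℝ) ≤ (1+f)*(c₁*d₁) + (1-a)*(c₂*d₂) + (1+a)*(-(d₁*c₂)) := by
      have := mul_nonneg hF0 h1; have := mul_nonneg hA1 h2; have := mul_nonneg hA0 hT1
      linarith
    have k1 : (1-f)*(c₁*d₁) + (1+a)*(c₂*d₂) + (1+f)*(-(d₂*c₁)) < (1-a)*(-(d₁*c₂)) := by linarith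
    have k2 : (1+f)*(c₁*d₁) + (1-a)*(c₂*d₂) + (1+a)*(-(d₁*c₂)) < (1-f)*(-(d₂*c₁)) := by linarith
    have k3 := mul_lt_mul'' k1 k2 hB1 hB2
    nlinarith [k3,
      mul_nonneg (mul_nonneg hF1 hF0) (mul_nonneg h1 h1),
      mul_nonneg (mul_nonneg hF1 hA1) (mul_nonneg h1 h2),
      mul_nonneg (mul_nonneg hF1 hA0) (mul_nonneg h1 hT1),
      mul_nonneg (mul_nonneg hA0 hF0) (mul_nonneg h1 h2),
      mul_nonneg (mul_nonneg hA0 hA1) (mul_nonneg h2 h2),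
      mul_nonneg (mul_nonneg hA0 hA0) (mul_nonneg h2 hT1),
      mul_nonneg (mul_nonneg hF0 hF0) (mul_nonneg h1 hT2),
      mul_nonneg (mul_nonneg hF0 hA1) (mul_nonneg h2 hT2),
      mul_nonneg (mul_nonneg hF0 hA0) (mul_nonneg hT1 hT2)]

/-- The scalar form of the comonotonicity inequality. -/
lemma keyQ (w₁ w₂ d₁ d₂ r s : ℝ) (hs : s^2 = 2) (hs0 : 0 ≤ s) (hr : 0 < r)
    (hQ : 0 ≤ (d₁*w₁+d₂*w₂) + (d₁*w₂-d₂*w₁) ∨ 0 ≤ (d₁*w₁+d₂*w₂) - (d₁*w₂-d₂*w₁)) :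
    d₁*(w₁+d₁/r) + d₂*(w₂+d₂/r) ≥ r*(1-s)/2 * ((w₁+d₁/r)^2 + (w₂+d₂/r)^2) := by
  have hs1 : 1 ≤ s := by nlinarith
  have hD : (0:ℝ) ≤ d₁^2 + d₂^2 := by positivity
  have hW : (0:ℝ) ≤ w₁^2 + w₂^2 := by positivity
  have hp2 : (Real.sqrt (d₁^2 + d₂^2))^2 = d₁^2 + d₂^2 := Real.sq_sqrt hD
  have hq2 : (Real.sqrt (w₁^2 + w₂^2))^2 = w₁^2 + w₂^2 := Real.sq_sqrt hW
  have hp0 : 0 ≤ Real.sqrt (d₁^2 + d₂^2) := Real.sqrt_nonneg _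
  have hq0 : 0 ≤ Real.sqrt (w₁^2 + w₂^2) := Real.sqrt_nonneg _
  set p := Real.sqrt (d₁^2 + d₂^2)
  set q := Real.sqrt (w₁^2 + w₂^2)
  -- Step A : `s * ⟨d, w⟩ ≥ -‖d‖ ‖w‖`
  have hsP : -(p*q) ≤ s*(d₁*w₁+d₂*w₂) := by
    rcases le_or_gt 0 (d₁*w₁+d₂*w₂) with hP0 | hP0
    · have : 0 ≤ p*q := mul_nonneg hp0 hq0
      nlinarith
    · have hcross : (d₁*w₁+d₂*w₂)^2 ≤ (d₁*w₂ - d₂*w₁)^2 := by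
        rcases hQ with hQ | hQ
        · nlinarith [mul_nonneg hQ (by linarith : (0:ℝ) ≤ (d₁*w₂-d₂*w₁) - (d₁*w₁+d₂*w₂))]
        · nlinarith [mul_nonneg hQ (by linarith : (0:ℝ) ≤ -(d₁*w₂-d₂*w₁) - (d₁*w₁+d₂*w₂))]
      have hDW : 2*(d₁*w₁+d₂*w₂)^2 ≤ (p*q)^2 := by
        have hpq : (p*q)^2 = (d₁^2+d₂^2)*(w₁^2+w₂^2) := by rw [mul_pow, hp2, hq2]
        nlinarith [sq_nonneg (d₁*w₂ - d₂*w₁)]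
      by_contra hlt
      push_neg at hlt
      have h0 : 0 ≤ p*q := mul_nonneg hp0 hq0
      have := mul_self_lt_mul_self h0 (by linarith : p*q < -(s*(d₁*w₁+d₂*w₂)))
      nlinarith
  -- Step B : AM–GM
  have hAM : 2*r*(p*q) ≤ (1+s)*(d₁^2+d₂^2) + (s-1)*r^2*(w₁^2+w₂^2) := by
    have h0 : 0 ≤ (s-1)*((1+s)*p - r*q)^2 :=
      mul_nonneg (sub_nonneg.2 hs1) (sq_nonneg _)
    have hexp : (s-1)*((1+s)*p - r*q)^2
        = (1+s)*p^2 - 2*r*(p*q) + (s-1)*r^2*q^2 := by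
      linear_combination ((s+1)*p^2 - 2*r*(p*q)) * hs
    rw [hexp] at h0
    have e1 : (1+s)*p^2 = (1+s)*(d₁^2+d₂^2) := by rw [hp2]
    have e2 : (s-1)*r^2*q^2 = (s-1)*r^2*(w₁^2+w₂^2) := by rw [hq2]
    linarith
  -- combine
  have key2 : 0 ≤ 2*s*r*(d₁*w₁+d₂*w₂) + (1+s)*(d₁^2+d₂^2) + (s-1)*r^2*(w₁^2+w₂^2) := by
    nlinarith [mul_le_mul_of_nonneg_left hsP (by linarith : (0:ℝ) ≤ 2*r)]
  rw [ge_iff_le, ← sub_nonneg]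
  have hT : d₁*(w₁+d₁/r) + d₂*(w₂+d₂/r) - r*(1-s)/2 * ((w₁+d₁/r)^2 + (w₂+d₂/r)^2)
      = (2*s*r*(d₁*w₁+d₂*w₂) + (1+s)*(d₁^2+d₂^2) + (s-1)*r^2*(w₁^2+w₂^2))/(2*r) := by
    field_simp
    ring
  rw [hT]
  exact div_nonneg key2 (by linarith)

lemma applyEM_apply_zero (a f u₁ u₂ : ℝ) :
    applyEM a f ((WithLp.equiv 2 (Fin 2 → ℝ)).symm ![u₁, u₂]) 0 = u₁ - a*u₂ := by
  simp [applyEM, Matrix.mulVec, dotProduct, Fin.sum_univ_two]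
  ring

lemma applyEM_apply_one (a f u₁ u₂ : ℝ) :
    applyEM a f ((WithLp.equiv 2 (Fin 2 → ℝ)).symm ![u₁, u₂]) 1 = u₂ - f*u₁ := by
  simp [applyEM, Matrix.mulVec, dotProduct, Fin.sum_univ_two]
  ring

theorem stmt_15 (aR aF : ℝ) (haR : aR ∈ Set.Ico (0 : ℝ) 1) (haF : aF ∈ Set.Ico (0 : ℝ) 1)
    (TD : ℝ → Set ℝ) (hTD : MonotoneSetValued TD) (r : ℝ) (hr : r > 0) :
    ∀ ⦃x u y v : EuclideanSpace ℝ (Fin 2)⦄,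
      u ∈ TNPNr aR aF TD r x → v ∈ TNPNr aR aF TD r y →
      (inner ℝ (x - y) (u - v) : ℝ) ≥ r * (1 - Real.sqrt 2) / 2 * ‖u - v‖ ^ 2 := by
  intro x u y v hu hv
  obtain ⟨wu, ⟨u₁, hu₁, u₂, hu₂, rfl⟩, rfl⟩ := hu
  obtain ⟨wv, ⟨v₁, hv₁, v₂, hv₂, rfl⟩, rfl⟩ := hv
  have hc1 : 0 ≤ (u₁ - v₁) * (x 0 - y 0) := hTD hu₁ hv₁
  have hc2 : 0 ≤ (u₂ - v₂) * (x 1 - y 1) := hTD hu₂ hv₂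
  set A := applyEM aR aF ((WithLp.equiv 2 (Fin 2 → ℝ)).symm ![u₁, u₂]) with hA
  set B := applyEM aR aF ((WithLp.equiv 2 (Fin 2 → ℝ)).symm ![v₁, v₂]) with hB
  have hd0 : (A + (1/r) • x - (B + (1/r) • y)) 0
      = ((u₁ - v₁) - aR*(u₂ - v₂)) + (x 0 - y 0)/r := by
    have e1 : A 0 = u₁ - aR*u₂ := applyEM_apply_zero aR aF u₁ u₂
    have e2 : B 0 = v₁ - aR*v₂ := applyEM_apply_zero aR aF v₁ v₂
    simp only [PiLp.sub_apply, PiLp.add_apply, PiLp.smul_apply, smul_eq_mul, e1, e2]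
    ring
  have hd1 : (A + (1/r) • x - (B + (1/r) • y)) 1
      = ((u₂ - v₂) - aF*(u₁ - v₁)) + (x 1 - y 1)/r := by
    have e1 : A 1 = u₂ - aF*u₁ := applyEM_apply_one aR aF u₁ u₂
    have e2 : B 1 = v₂ - aF*v₁ := applyEM_apply_one aR aF v₁ v₂
    simp only [PiLp.sub_apply, PiLp.add_apply, PiLp.smul_apply, smul_eq_mul, e1, e2]
    ring
  have hinner : (inner ℝ (x - y) (A + (1/r) • x - (B + (1/r) • y)) : ℝ)
      = (x 0 - y 0) * ((A + (1/r) • x - (B + (1/r) • y)) 0)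
        + (x 1 - y 1) * ((A + (1/r) • x - (B + (1/r) • y)) 1) := by
    simp [PiLp.inner_apply, Fin.sum_univ_two, RCLike.inner_apply, PiLp.sub_apply]
    ring
  have hnorm : ‖A + (1/r) • x - (B + (1/r) • y)‖^2
      = ((A + (1/r) • x - (B + (1/r) • y)) 0)^2
        + ((A + (1/r) • x - (B + (1/r) • y)) 1)^2 := by
    rw [← real_inner_self_eq_norm_sq]
    simp only [PiLp.inner_apply, Fin.sum_univ_two, RCLike.inner_apply, starRingEnd_apply, star_trivial]
    ring
  rw [hinner, hnorm, hd0, hd1]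
  exact keyQ _ _ _ _ r (Real.sqrt 2) (Real.sq_sqrt (by norm_num)) (Real.sqrt_nonneg 2) hr
    (key_max aR aF (u₁ - v₁) (u₂ - v₂) (x 0 - y 0) (x 1 - y 1)
      haR.1 haR.2.le haF.1 haF.2.le hc1 hc2)
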